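/- Let (X, 𝒜, μ) be a probability space and let {E_i}_{i∈ℕ} be a sequence of measurable subsets of X. Suppose there exist constants C' > 0 and c > 0 and a sequence of finite subsets S_k ⊆ ℕ with min S_k → +∞ as k → ∞, such that for all sufficiently large k one has ∑_{i∈S_k} μ(E_i) ≥ c and ∑_{s<t, s,t∈S_k} μ(E_s ∩ E_t) ≤ C' (∑_{i∈S_k} μ(E_i))². In addition, suppose property (M1) holds: for any δ > 0 and any natural numbers q₁ < q₂, setting A = ⋃_{j=q₁}^{q₂} E_j, there exists i₀ = i₀(q₁,q₂,δ) such that for all i ≥ i₀ one has μ(A ∩ E_i) ≤ (1+δ) μ(A) μ(E_i). Then μ(E_∞) = 1. -/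

import Mathlib

open MeasureTheory Filter Topology
open scoped ENNReal

/-- Chung–Erdős inequality (ENNReal form). -/
lemma my_chung_erdos {X : Type*} [MeasurableSpace X] (μ : Measure X)
    (S : Finset ℕ) (F : ℕ → Set X) (hF : ∀ i, MeasurableSet (F i)) :
    (∑ i ∈ S, μ (F i)) ^ 2 ≤
      (∑ s ∈ S, ∑ t ∈ S, μ (F s ∩ F t)) * μ (⋃ i ∈ S, F i) := by
  classical
  set U : Set X := ⋃ i ∈ S, F i with hU
  have hUm : MeasurableSet U := MeasurableSet.biUnion S.countable_toSet fun i _ => hF i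
  set f : X → ℝ≥0∞ := fun x => ∑ i ∈ S, (F i).indicator 1 x with hfdef
  set g : X → ℝ≥0∞ := fun x => U.indicator 1 x with hgdef
  have hfm : Measurable f := Finset.measurable_sum _ fun i _ => measurable_one.indicator (hF i)
  have hgm : Measurable g := measurable_one.indicator hUm
  have hfg : f * g = f := by
    funext x
    by_cases hx : x ∈ U
    · simp [hgdef, Set.indicator_of_mem hx]
    · have hx' : ∀ i ∈ S, x ∉ F i := by
        intro i hi hmem
        exact hx (Set.mem_biUnion hi hmem)
      simp [hfdef, hgdef, Set.indicator_of_notMem hx,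
        Finset.sum_eq_zero fun i hi => Set.indicator_of_notMem (hx' i hi) _]
  have hIf : ∫⁻ x, f x ∂μ = ∑ i ∈ S, μ (F i) := by
    rw [hfdef]
    rw [lintegral_finset_sum _ fun i _ => measurable_one.indicator (hF i)]
    exact Finset.sum_congr rfl fun i _ => lintegral_indicator_one (hF i)
  have hIf2 : ∫⁻ x, f x ^ (2:ℝ) ∂μ = ∑ s ∈ S, ∑ t ∈ S, μ (F s ∩ F t) := by
    have : ∀ x, f x ^ (2:ℝ) = ∑ s ∈ S, ∑ t ∈ S, (F s ∩ F t).indicator 1 x := by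
      intro x
      rw [show (2:ℝ) = ((2:ℕ):ℝ) by norm_num, ENNReal.rpow_natCast, sq, hfdef,
        Finset.sum_mul_sum]
      exact Finset.sum_congr rfl fun s _ => Finset.sum_congr rfl fun t _ => by
        rw [Set.inter_indicator_one]; rfl
    simp_rw [this]
    rw [lintegral_finset_sum _ fun s _ => Finset.measurable_sum _ fun t _ =>
      measurable_one.indicator ((hF s).inter (hF t))]
    refine Finset.sum_congr rfl fun s _ => ?_
    rw [lintegral_finset_sum _ fun t _ => measurable_one.indicator ((hF s).inter (hF t))]
    exact Finset.sum_congr rfl fun t _ => lintegral_indicator_one ((hF s).inter (hF t))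
  have hIg2 : ∫⁻ x, g x ^ (2:ℝ) ∂μ = μ U := by
    have : ∀ x, g x ^ (2:ℝ) = U.indicator 1 x := by
      intro x
      by_cases hx : x ∈ U
      · simp [hgdef, Set.indicator_of_mem hx]
      · simp [hgdef, Set.indicator_of_notMem hx, ENNReal.zero_rpow_of_pos (by norm_num : (0:ℝ) < 2)]
    simp_rw [this]
    exact lintegral_indicator_one hUm
  have hconj : Real.HolderConjugate 2 2 := ⟨by norm_num, by norm_num, by norm_num⟩
  have holder := ENNReal.lintegral_mul_le_Lp_mul_Lq μ hconj hfm.aemeasurable hgm.aemeasurable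
  rw [hfg, hIf, hIf2, hIg2] at holder
  -- square both sides
  have hsq := pow_le_pow_left' holder 2
  calc (∑ i ∈ S, μ (F i)) ^ 2
      ≤ ((∑ s ∈ S, ∑ t ∈ S, μ (F s ∩ F t)) ^ (1/2 : ℝ) * μ U ^ (1/2 : ℝ)) ^ 2 := hsq
    _ = (∑ s ∈ S, ∑ t ∈ S, μ (F s ∩ F t)) * μ U := by
        rw [mul_pow, ← ENNReal.rpow_natCast (_ ^ (1/2:ℝ)) 2, ← ENNReal.rpow_natCast (_ ^ (1/2:ℝ)) 2,
          ← ENNReal.rpow_mul, ← ENNReal.rpow_mul]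
        norm_num

/-- If eventually `ε ≤ μ (A k)`, then `ε ≤ μ (limsup A atTop)`. -/
lemma my_le_measure_limsup {X : Type*} [MeasurableSpace X] (μ : Measure X) [IsFiniteMeasure μ]
    (A : ℕ → Set X) (hA : ∀ k, MeasurableSet (A k)) (ε : ℝ≥0∞)
    (h : ∀ᶠ k in atTop, ε ≤ μ (A k)) :
    ε ≤ μ (limsup A atTop) := by
  obtain ⟨K, hK⟩ := eventually_atTop.1 h
  set T : ℕ → Set X := fun n => ⋃ i, ⋃ (_ : n ≤ i), A i with hT
  have hTeq : limsup A atTop = ⋂ n, T n := by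
    ext x
    simp only [mem_limsup_iff_frequently_mem, frequently_atTop, Set.mem_iInter, hT,
      Set.mem_iUnion]
    exact ⟨fun hx n => let ⟨b, hb, hxb⟩ := hx n; ⟨b, hb, hxb⟩,
      fun hx n => let ⟨b, hb, hxb⟩ := hx n; ⟨b, hb, hxb⟩⟩
  have hTm : ∀ n, NullMeasurableSet (T n) μ :=
    fun n => (MeasurableSet.biUnion (Set.to_countable _) fun i _ => hA i).nullMeasurableSet
  have hmono : Antitone T := by
    intro n m hnm x hx
    simp only [hT, Set.mem_iUnion] at hx ⊢
    obtain ⟨i, hi, hxi⟩ := hx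
    exact ⟨i, hnm.trans hi, hxi⟩
  have htend := tendsto_measure_iInter_atTop hTm hmono ⟨0, measure_ne_top μ _⟩
  rw [hTeq]
  refine ge_of_tendsto htend (Eventually.of_forall fun n => ?_)
  calc ε ≤ μ (A (max n K)) := hK _ (le_max_right _ _)
    _ ≤ μ (T n) := measure_mono (by
        intro x hx
        simp only [hT, Set.mem_iUnion]
        exact ⟨max n K, le_max_left _ _, hx⟩)

lemma my_limsup_subset {X : Type*} (E : ℕ → Set X) (S : ℕ → Finset ℕ)
    (hmin : ∀ N : ℕ, ∀ᶠ k in atTop, ∀ i ∈ S k, N ≤ i) (F : ℕ → Set X) (hFE : ∀ i, F i ⊆ E i) :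
    limsup (fun k => ⋃ i ∈ S k, F i) atTop ⊆ limsup E atTop := by
  intro x hx
  rw [mem_limsup_iff_frequently_mem] at hx ⊢
  rw [frequently_atTop]
  intro N
  obtain ⟨k, hk1, hk2⟩ := (hx.and_eventually (hmin N)).exists
  obtain ⟨i, hiS, hiF⟩ := Set.mem_iUnion₂.1 hk1
  exact ⟨i, hk2 i hiS, hFE i hiF⟩

set_option maxHeartbeats 1000000 in
theorem generalised_divergence_borel_cantelli_M1_full_measure
    {X : Type*} [MeasurableSpace X] (μ : Measure X) [IsProbabilityMeasure μ]
    (E : ℕ → Set X) (hE : ∀ i, MeasurableSet (E i))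
    (C' c : ℝ) (hC' : 0 < C') (hc : 0 < c)
    (S : ℕ → Finset ℕ)
    (hmin : ∀ N : ℕ, ∀ᶠ k in atTop, ∀ i ∈ S k, N ≤ i)
    (hmass : ∀ᶠ k in atTop, c ≤ ∑ i ∈ S k, (μ (E i)).toReal)
    (hpair : ∀ᶠ k in atTop,
      ∑ s ∈ S k, ∑ t ∈ S k, (if s < t then (μ (E s ∩ E t)).toReal else 0)
        ≤ C' * (∑ i ∈ S k, (μ (E i)).toReal) ^ 2)
    (hM1 : ∀ δ : ℝ, 0 < δ → ∀ q₁ q₂ : ℕ, q₁ < q₂ →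
      ∃ i₀ : ℕ, ∀ i ≥ i₀,
        (μ ((⋃ j ∈ Finset.Icc q₁ q₂, E j) ∩ E i)).toReal
          ≤ (1 + δ) * (μ (⋃ j ∈ Finset.Icc q₁ q₂, E j)).toReal * (μ (E i)).toReal) :
    μ (limsup E atTop) = 1 := by
  by_contra hne
  set L : Set X := limsup E atTop with hL
  have hLlt : μ L < 1 := lt_of_le_of_ne prob_le_one hne
  set m : ℝ := (μ L).toReal with hm
  have hm1 : m < 1 := by
    have := ENNReal.toReal_strict_mono (by norm_num : (1:ℝ≥0∞) ≠ ⊤) hLlt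
    simpa using this
  have hm0 : 0 ≤ m := ENNReal.toReal_nonneg
  set ε : ℝ := 1 - m with hε
  have hε0 : 0 < ε := by linarith
  have hε1 : ε ≤ 1 := by linarith
  have hden : (0:ℝ) < 1 + 2 * C' * c := by positivity
  set κ : ℝ := c / (1 + 2 * C' * c) with hκdef
  have hκ : 0 < κ := div_pos hc hden
  set δ : ℝ := ε / 4 with hδdef
  have hδ : 0 < δ := by positivity
  set η : ℝ := min (ε / 4) ((ε / 2) ^ 2 * κ / 2) with hηdef
  have hη : 0 < η := lt_min (by positivity) (by positivity)
  have hη1 : η ≤ ε / 4 := min_le_left _ _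
  have hη2 : η ≤ (ε / 2) ^ 2 * κ / 2 := min_le_right _ _
  -- tail unions
  set T : ℕ → Set X := fun n => ⋃ i, ⋃ (_ : n ≤ i), E i with hT
  have hTm : ∀ n, MeasurableSet (T n) :=
    fun n => MeasurableSet.biUnion (Set.to_countable _) fun i _ => hE i
  have hTmono : Antitone T := by
    intro n k hnk x hx
    simp only [hT, Set.mem_iUnion] at hx ⊢
    obtain ⟨i, hi, hxi⟩ := hx
    exact ⟨i, hnk.trans hi, hxi⟩
  have hLT : L = ⋂ n, T n := by
    ext x
    simp only [hL, mem_limsup_iff_frequently_mem, frequently_atTop, Set.mem_iInter, hT,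
      Set.mem_iUnion]
    exact ⟨fun hx n => let ⟨i, hi, hxi⟩ := hx n; ⟨i, hi, hxi⟩,
      fun hx n => let ⟨i, hi, hxi⟩ := hx n; ⟨i, hi, hxi⟩⟩
  have hLsub : ∀ n, L ⊆ T n := by
    intro n; rw [hLT]; exact Set.iInter_subset _ n
  have htendT : Tendsto (fun n => (μ (T n)).toReal) atTop (𝓝 m) := by
    have h1 : Tendsto (fun n => μ (T n)) atTop (𝓝 (μ L)) := by
      rw [hLT]
      exact tendsto_measure_iInter_atTop (fun n => (hTm n).nullMeasurableSet) hTmono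
        ⟨0, measure_ne_top μ _⟩
    exact (ENNReal.tendsto_toReal (measure_ne_top μ L)).comp h1
  obtain ⟨q₁, hq₁⟩ := (htendT.eventually_lt_const (by linarith : m < m + η)).exists
  set tq : ℝ := (μ (T q₁)).toReal with htqdef
  have hmtq : m ≤ tq := ENNReal.toReal_mono (measure_ne_top μ _) (measure_mono (hLsub q₁))
  -- choose q₂
  have htendA : Tendsto (fun n => (μ (⋃ j ∈ Finset.Icc q₁ n, E j)).toReal) atTop (𝓝 tq) := by
    have hmono : Monotone (fun n => ⋃ j ∈ Finset.Icc q₁ n, E j) := by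
      intro n k hnk x hx
      simp only [Set.mem_iUnion, Finset.mem_Icc] at hx ⊢
      obtain ⟨j, ⟨h1, h2⟩, hxj⟩ := hx
      exact ⟨j, ⟨h1, h2.trans hnk⟩, hxj⟩
    have hun : ⋃ n, ⋃ j ∈ Finset.Icc q₁ n, E j = T q₁ := by
      ext x
      simp only [Set.mem_iUnion, hT, Finset.mem_Icc]
      constructor
      · rintro ⟨n, j, ⟨h1, _⟩, hx⟩; exact ⟨j, h1, hx⟩
      · rintro ⟨j, h1, hx⟩; exact ⟨j, j, ⟨h1, le_refl j⟩, hx⟩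
    have h2 := tendsto_measure_iUnion_atTop (μ := μ) hmono
    rw [hun] at h2
    exact (ENNReal.tendsto_toReal (measure_ne_top μ _)).comp h2
  obtain ⟨q₂, hq₂a, hq₂b⟩ := ((htendA.eventually_const_lt (by linarith : tq - η < tq)).and
    (eventually_gt_atTop q₁)).exists
  set Aset : Set X := ⋃ j ∈ Finset.Icc q₁ q₂, E j with hAsetdef
  have hAm : MeasurableSet Aset :=
    MeasurableSet.biUnion (Finset.countable_toSet _) fun j _ => hE j
  set a : ℝ := (μ Aset).toReal with hadef
  have haq : tq - η < a := hq₂a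
  have hAsubT : Aset ⊆ T q₁ := by
    intro x hx
    simp only [hAsetdef, Set.mem_iUnion, Finset.mem_Icc] at hx
    obtain ⟨j, ⟨h1, _⟩, hxj⟩ := hx
    simp only [hT, Set.mem_iUnion]
    exact ⟨j, h1, hxj⟩
  have hatq : a ≤ tq := ENNReal.toReal_mono (measure_ne_top μ _) (measure_mono hAsubT)
  have ha0 : 0 ≤ a := ENNReal.toReal_nonneg
  set b : ℝ := 1 - (1 + δ) * a with hbdef
  have hbε : ε / 2 ≤ b := by
    have h1 : a ≤ 1 - ε + η := by linarith
    have h2 : (1 + δ) * a ≤ (1 + δ) * (1 - ε + η) :=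
      mul_le_mul_of_nonneg_left h1 (by linarith)
    have h3 : (1 + δ) * (1 - ε + η) ≤ (1 + δ) * (1 - ε + ε / 4) :=
      mul_le_mul_of_nonneg_left (by linarith) (by linarith)
    have h4 : (1 + δ) * (1 - ε + ε / 4) ≤ 1 - ε / 2 := by
      rw [hδdef]
      nlinarith [sq_nonneg ε]
    have h5 : (1 + δ) * a ≤ 1 - ε / 2 := h2.trans (h3.trans h4)
    rw [hbdef]
    linarith [h5]
  have hb0 : 0 < b := by linarith
  obtain ⟨i₀, hi₀⟩ := hM1 δ hδ q₁ q₂ hq₂b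
  set F : ℕ → Set X := fun i => Asetᶜ ∩ E i with hFdef
  have hFm : ∀ i, MeasurableSet (F i) := fun i => hAm.compl.inter (hE i)
  have hFE : ∀ i, F i ⊆ E i := fun i => Set.inter_subset_right
  have hbκ0 : 0 ≤ b ^ 2 * κ := mul_nonneg (sq_nonneg b) hκ.le
  have hkey : ∀ᶠ k in atTop, ENNReal.ofReal (b ^ 2 * κ) ≤ μ (⋃ i ∈ S k, F i) := by
    filter_upwards [hmin i₀, hmass, hpair] with k hk1 hk2 hk3
    set Tk : ℝ := ∑ i ∈ S k, (μ (E i)).toReal with hTkdef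
    set P : ℝ := ∑ i ∈ S k, (μ (F i)).toReal with hPdef
    have hTc : c ≤ Tk := hk2
    have hFi : ∀ i ∈ S k, b * (μ (E i)).toReal ≤ (μ (F i)).toReal := by
      intro i hi
      have hsplit : μ (E i ∩ Aset) + μ (E i \ Aset) = μ (E i) :=
        measure_inter_add_diff (E i) hAm
      have hFieq : F i = E i \ Aset := by
        rw [hFdef]; rw [Set.diff_eq, Set.inter_comm]
      have h1 : (μ (E i ∩ Aset)).toReal + (μ (F i)).toReal = (μ (E i)).toReal := by
        rw [hFieq, ← ENNReal.toReal_add (measure_ne_top μ _) (measure_ne_top μ _), hsplit]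
      have h2 : (μ (Aset ∩ E i)).toReal ≤ (1 + δ) * a * (μ (E i)).toReal := hi₀ i (hk1 i hi)
      rw [Set.inter_comm] at h2
      have h3 : b * (μ (E i)).toReal
          = (μ (E i)).toReal - (1 + δ) * a * (μ (E i)).toReal := by
        rw [hbdef]; ring
      linarith
    have hPT : b * Tk ≤ P := by
      rw [hPdef, hTkdef, Finset.mul_sum]
      exact Finset.sum_le_sum hFi
    have hP0 : 0 < P := lt_of_lt_of_le (mul_pos hb0 (hc.trans_le hTc)) hPT
    have hce := my_chung_erdos μ (S k) F hFm
    set u : ℝ := (μ (⋃ i ∈ S k, F i)).toReal with hudef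
    set D : ℝ := ∑ s ∈ S k, ∑ t ∈ S k, (μ (F s ∩ F t)).toReal with hDdef
    have hinner : ∀ s, (∑ t ∈ S k, μ (F s ∩ F t)) ≠ ⊤ :=
      fun s => ENNReal.sum_ne_top.2 fun t _ => measure_ne_top μ _
    have hne1 : (∑ s ∈ S k, ∑ t ∈ S k, μ (F s ∩ F t)) ≠ ⊤ :=
      ENNReal.sum_ne_top.2 fun s _ => hinner s
    have hreal : P ^ 2 ≤ D * u := by
      have h := ENNReal.toReal_mono (ENNReal.mul_ne_top hne1 (measure_ne_top μ _)) hce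
      rw [ENNReal.toReal_mul, ENNReal.toReal_pow,
        ENNReal.toReal_sum (fun i _ => measure_ne_top μ _)] at h
      have hDeq : (∑ s ∈ S k, ∑ t ∈ S k, μ (F s ∩ F t)).toReal = D := by
        rw [ENNReal.toReal_sum (fun s _ => hinner s)]
        exact Finset.sum_congr rfl fun s _ =>
          ENNReal.toReal_sum fun t _ => measure_ne_top μ _
      rw [hDeq] at h
      exact h
    have hDle : D ≤ Tk + 2 * (C' * Tk ^ 2) := by
      have hterm : ∀ s ∈ S k, ∀ t ∈ S k, (μ (F s ∩ F t)).toReal ≤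
          (if s = t then (μ (E s)).toReal else 0)
          + ((if s < t then (μ (E s ∩ E t)).toReal else 0)
          + (if t < s then (μ (E t ∩ E s)).toReal else 0)) := by
        intro s _ t _
        rcases lt_trichotomy s t with h | h | h
        · have hle : (μ (F s ∩ F t)).toReal ≤ (μ (E s ∩ E t)).toReal :=
            ENNReal.toReal_mono (measure_ne_top μ _)
              (measure_mono (Set.inter_subset_inter (hFE s) (hFE t)))
          simpa [h.ne, h, asymm h] using hle
        · subst h
          have hle : (μ (F s ∩ F s)).toReal ≤ (μ (E s)).toReal :=
            ENNReal.toReal_mono (measure_ne_top μ _)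
              (measure_mono (Set.inter_subset_left.trans (hFE s)))
          simpa using hle
        · have hle : (μ (F s ∩ F t)).toReal ≤ (μ (E t ∩ E s)).toReal :=
            ENNReal.toReal_mono (measure_ne_top μ _)
              (measure_mono fun x hx => ⟨hFE t hx.2, hFE s hx.1⟩)
          simpa [h.ne', h, asymm h] using hle
      have hsplit : D ≤ (∑ s ∈ S k, ∑ t ∈ S k, (if s = t then (μ (E s)).toReal else 0))
          + ((∑ s ∈ S k, ∑ t ∈ S k, (if s < t then (μ (E s ∩ E t)).toReal else 0))
          + (∑ s ∈ S k, ∑ t ∈ S k, (if t < s then (μ (E t ∩ E s)).toReal else 0))) := by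
        rw [hDdef, ← Finset.sum_add_distrib, ← Finset.sum_add_distrib]
        refine Finset.sum_le_sum fun s hs => ?_
        rw [← Finset.sum_add_distrib, ← Finset.sum_add_distrib]
        exact Finset.sum_le_sum fun t ht => hterm s hs t ht
      have hX1 : ∑ s ∈ S k, ∑ t ∈ S k, (if s = t then (μ (E s)).toReal else 0) = Tk := by
        rw [hTkdef]
        refine Finset.sum_congr rfl fun s hs => ?_
        rw [Finset.sum_ite_eq (S k) s (fun _ => (μ (E s)).toReal), if_pos hs]
      have hX3 : ∑ s ∈ S k, ∑ t ∈ S k, (if t < s then (μ (E t ∩ E s)).toReal else 0)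
          ≤ C' * Tk ^ 2 := by
        rw [Finset.sum_comm]
        exact hk3
      linarith [hk3, hX3, hsplit, hX1.le, hX1.ge]
    have hDP : P ≤ D := by
      rw [hPdef, hDdef]
      refine Finset.sum_le_sum fun s hs => ?_
      have h := Finset.single_le_sum (f := fun t => (μ (F s ∩ F t)).toReal)
        (fun t _ => ENNReal.toReal_nonneg) hs
      simpa [Set.inter_self] using h
    have hD0 : 0 < D := lt_of_lt_of_le hP0 hDP
    have harith : b ^ 2 * κ ≤ u := by
      have hbTP : (b * Tk) ^ 2 ≤ P ^ 2 :=
        pow_le_pow_left₀ (mul_nonneg hb0.le (hc.le.trans hTc)) hPT 2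
      have hκD : κ * D ≤ Tk ^ 2 := by
        rw [hκdef, div_mul_eq_mul_div, div_le_iff₀ hden]
        have hA : c * D ≤ c * (Tk + 2 * (C' * Tk ^ 2)) :=
          mul_le_mul_of_nonneg_left hDle hc.le
        have hB : c * Tk ≤ Tk * Tk := mul_le_mul_of_nonneg_right hTc (hc.le.trans hTc)
        calc c * D ≤ c * (Tk + 2 * (C' * Tk ^ 2)) := hA
          _ = c * Tk + 2 * C' * c * Tk ^ 2 := by ring
          _ ≤ Tk * Tk + 2 * C' * c * Tk ^ 2 := by linarith
          _ = Tk ^ 2 * (1 + 2 * C' * c) := by ring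
      have h1 : b ^ 2 * κ * D ≤ D * u := by
        calc b ^ 2 * κ * D = b ^ 2 * (κ * D) := by ring
          _ ≤ b ^ 2 * Tk ^ 2 := mul_le_mul_of_nonneg_left hκD (sq_nonneg b)
          _ = (b * Tk) ^ 2 := by ring
          _ ≤ P ^ 2 := hbTP
          _ ≤ D * u := hreal
      rw [mul_comm D u] at h1
      exact le_of_mul_le_mul_right h1 hD0
    exact ENNReal.ofReal_le_of_le_toReal harith
  have hlim := my_le_measure_limsup μ (fun k => ⋃ i ∈ S k, F i)
    (fun k => MeasurableSet.biUnion (Finset.countable_toSet _) fun i _ => hFm i) _ hkey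
  have hsub : limsup (fun k => ⋃ i ∈ S k, F i) atTop ⊆ Asetᶜ ∩ L := by
    intro x hx
    refine ⟨?_, my_limsup_subset E S hmin F hFE hx⟩
    rw [mem_limsup_iff_frequently_mem] at hx
    obtain ⟨k, hk⟩ := hx.exists
    obtain ⟨i, hiS, hiF⟩ := Set.mem_iUnion₂.1 hk
    exact hiF.1
  have hfinal : ENNReal.ofReal (b ^ 2 * κ) ≤ μ (Asetᶜ ∩ L) := hlim.trans (measure_mono hsub)
  have hub : (μ (Asetᶜ ∩ L)).toReal ≤ tq - a := by
    have hsub2 : Asetᶜ ∩ L ⊆ T q₁ \ Aset := fun x hx => ⟨hLsub q₁ hx.2, hx.1⟩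
    have hdiff : μ (T q₁ \ Aset) = μ (T q₁) - μ Aset :=
      measure_diff hAsubT hAm.nullMeasurableSet (measure_ne_top μ _)
    have h := ENNReal.toReal_mono (measure_ne_top μ _) (measure_mono hsub2)
    rwa [hdiff, ENNReal.toReal_sub_of_le (measure_mono hAsubT) (measure_ne_top μ _)] at h
  have hlb : b ^ 2 * κ ≤ (μ (Asetᶜ ∩ L)).toReal := by
    have h := ENNReal.toReal_mono (measure_ne_top μ _) hfinal
    rwa [ENNReal.toReal_ofReal hbκ0] at h
  have hblow : (ε / 2) ^ 2 * κ ≤ b ^ 2 * κ :=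
    mul_le_mul_of_nonneg_right (pow_le_pow_left₀ (by positivity) hbε 2) hκ.le
  have hpos : 0 < (ε / 2) ^ 2 * κ := by positivity
  have hta : tq - a < η := by linarith [haq]
  have h6 : b ^ 2 * κ < η := lt_of_le_of_lt (hlb.trans hub) hta
  have h7 : b ^ 2 * κ < (ε / 2) ^ 2 * κ / 2 := h6.trans_le hη2
  linarith [hblow, hpos, h7]
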